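/- arXiv:2605.21846 — 6 statements merged into one kernel-verified Lean document; each statement's English description precedes it below -/
import Mathlib

section
/- Let B, B' ∈ ℝ^{p×p} be invertible, let A₁, A₁' ∈ ℝ^{p×p}, and let σ, σ' > 0. Then B⁻¹ A₁ = B'⁻¹ A₁' and σ² · B⁻¹ B⁻ᵀ = σ'² · B'⁻¹ B'⁻ᵀ hold if and only if there exist an orthogonal matrix Q ∈ ℝ^{p×p} and a scalar c > 0 such that B' = c · Q · B, A₁' = c · Q · A₁, and σ' = c · σ. -/
open Matrix

/-- **Orthogonal characterization of observational equivalence** (Theorem 3.2).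
Two admissible structural VAR(1) models `(B, A₁, σ)` and `(B', A₁', σ')` induce the same
reduced-form parameters `Φ = B⁻¹ A₁` and `Σᵤ = σ² B⁻¹ B⁻ᵀ` if and only if they are related
by an orthogonal transformation `Q` and a positive global scale `c`. -/
theorem obs_equiv_orthogonal_characterization (p : ℕ)
    (B B' A₁ A₁' : Matrix (Fin p) (Fin p) ℝ)
    (hB : IsUnit B.det) (hB' : IsUnit B'.det)
    (σ σ' : ℝ) (hσ : 0 < σ) (hσ' : 0 < σ') :
    (B⁻¹ * A₁ = B'⁻¹ * A₁' ∧
      σ ^ 2 • (B⁻¹ * (B⁻¹)ᵀ) = σ' ^ 2 • (B'⁻¹ * (B'⁻¹)ᵀ)) ↔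
    ∃ (Q : Matrix (Fin p) (Fin p) ℝ) (c : ℝ), Qᵀ * Q = 1 ∧ 0 < c ∧
      B' = c • (Q * B) ∧ A₁' = c • (Q * A₁) ∧ σ' = c * σ := by
  have hBinv : B⁻¹ * B = 1 := Matrix.nonsing_inv_mul B hB
  have hBinv' : B * B⁻¹ = 1 := Matrix.mul_nonsing_inv B hB
  have hB'inv : B'⁻¹ * B' = 1 := Matrix.nonsing_inv_mul B' hB'
  have hB'inv' : B' * B'⁻¹ = 1 := Matrix.mul_nonsing_inv B' hB'
  constructor
  · rintro ⟨hΦ, hSig⟩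
    have hσne : σ ≠ 0 := ne_of_gt hσ
    set c : ℝ := σ' / σ with hc
    have hcpos : 0 < c := div_pos hσ' hσ
    have hcne : c ≠ 0 := ne_of_gt hcpos
    have hT : (B'⁻¹)ᵀ * B'ᵀ = 1 := by
      rw [← Matrix.transpose_mul, hB'inv', Matrix.transpose_one]
    have h2 : σ ^ 2 • (B' * B⁻¹ * (B⁻¹)ᵀ * B'ᵀ) = σ' ^ 2 • (1 : Matrix (Fin p) (Fin p) ℝ) := by
      calc σ ^ 2 • (B' * B⁻¹ * (B⁻¹)ᵀ * B'ᵀ)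
          = B' * (σ ^ 2 • (B⁻¹ * (B⁻¹)ᵀ)) * B'ᵀ := by
            rw [Matrix.mul_smul, Matrix.smul_mul, Matrix.mul_assoc B' B⁻¹]
        _ = B' * (σ' ^ 2 • (B'⁻¹ * (B'⁻¹)ᵀ)) * B'ᵀ := by rw [hSig]
        _ = σ' ^ 2 • (1 : Matrix (Fin p) (Fin p) ℝ) := by
            rw [Matrix.mul_smul, Matrix.smul_mul, ← Matrix.mul_assoc B' B'⁻¹, hB'inv',
              Matrix.one_mul, hT]
    have key : B' * B⁻¹ * (B⁻¹)ᵀ * B'ᵀ = (c ^ 2) • (1 : Matrix (Fin p) (Fin p) ℝ) := by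
      have hσ2 : (σ : ℝ) ^ 2 ≠ 0 := pow_ne_zero 2 hσne
      have h3 := congrArg (fun M => (σ ^ 2)⁻¹ • M) h2
      simp only [smul_smul, inv_mul_cancel₀ hσ2, one_smul] at h3
      rw [h3, hc]
      congr 1
      field_simp
    refine ⟨c⁻¹ • (B' * B⁻¹), c, ?_, hcpos, ?_, ?_, (div_mul_cancel₀ σ' hσne).symm⟩
    · rw [mul_eq_one_comm]
      calc (c⁻¹ • (B' * B⁻¹)) * (c⁻¹ • (B' * B⁻¹))ᵀ
          = (c⁻¹ * c⁻¹) • (B' * B⁻¹ * (B⁻¹)ᵀ * B'ᵀ) := by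
            rw [Matrix.transpose_smul, Matrix.transpose_mul, Matrix.smul_mul, Matrix.mul_smul,
              smul_smul, Matrix.mul_assoc (B' * B⁻¹)]
        _ = (c⁻¹ * c⁻¹ * c ^ 2) • (1 : Matrix (Fin p) (Fin p) ℝ) := by rw [key, smul_smul]
        _ = 1 := by
            have : c⁻¹ * c⁻¹ * c ^ 2 = 1 := by field_simp
            rw [this, one_smul]
    · rw [Matrix.smul_mul, smul_smul, mul_inv_cancel₀ hcne, one_smul, Matrix.mul_assoc,
        hBinv, Matrix.mul_one]
    · have hA : A₁' = B' * (B⁻¹ * A₁) := by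
        rw [hΦ, ← Matrix.mul_assoc, hB'inv', Matrix.one_mul]
      rw [Matrix.smul_mul, smul_smul, mul_inv_cancel₀ hcne, one_smul, hA, Matrix.mul_assoc]
  · rintro ⟨Q, c, hQ, hcpos, hB'eq, hA'eq, hσeq⟩
    have hcne : c ≠ 0 := ne_of_gt hcpos
    have hQQt : Q * Qᵀ = 1 := mul_eq_one_comm.mp hQ
    have hBi : B'⁻¹ = c⁻¹ • (B⁻¹ * Qᵀ) := by
      apply Matrix.inv_eq_right_inv
      rw [hB'eq, Matrix.smul_mul, Matrix.mul_smul, smul_smul, mul_inv_cancel₀ hcne, one_smul,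
        Matrix.mul_assoc, ← Matrix.mul_assoc B, hBinv', Matrix.one_mul, hQQt]
    constructor
    · rw [hBi, hA'eq, Matrix.smul_mul, Matrix.mul_smul, smul_smul, inv_mul_cancel₀ hcne,
        one_smul, Matrix.mul_assoc, ← Matrix.mul_assoc Qᵀ, hQ, Matrix.one_mul]
    · rw [hBi, hσeq, Matrix.transpose_smul, Matrix.transpose_mul, Matrix.transpose_transpose,
        Matrix.smul_mul, Matrix.mul_smul, smul_smul, smul_smul,
        Matrix.mul_assoc B⁻¹, ← Matrix.mul_assoc Qᵀ, hQ, Matrix.one_mul]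
      congr 1
      field_simp
end

section
/- Let B, B' ∈ ℝ^{p×p} be invertible, let A₁, A₁' ∈ ℝ^{p×p}, and let σ, σ' > 0. Then B⁻¹ A₁ = B'⁻¹ A₁' and σ'² · B'⁻¹ B'⁻ᵀ = a · σ² · B⁻¹ B⁻ᵀ for some a > 0 hold if and only if there exist an orthogonal matrix Q ∈ ℝ^{p×p} and a scalar c > 0 such that B' = c · Q · B and A₁' = c · Q · A₁ (with no condition relating σ' to σ). -/
open Matrix

/-- **Scale-free orthogonal characterization** (Theorem 3.5).
Two admissible structural VAR(1) models have the same reduced-form transition matrix and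
proportional reduced-form residual covariances if and only if `B' = cQB` and `A₁' = cQA₁`
for some orthogonal `Q` and some `c > 0` (with no condition relating `σ'` to `σ`). -/
theorem scale_free_orthogonal_characterization (p : ℕ)
    (B B' A₁ A₁' : Matrix (Fin p) (Fin p) ℝ)
    (hB : IsUnit B.det) (hB' : IsUnit B'.det)
    (σ σ' : ℝ) (hσ : 0 < σ) (hσ' : 0 < σ') :
    (B⁻¹ * A₁ = B'⁻¹ * A₁' ∧
      ∃ a : ℝ, 0 < a ∧
        σ' ^ 2 • (B'⁻¹ * (B'⁻¹)ᵀ) = a • (σ ^ 2 • (B⁻¹ * (B⁻¹)ᵀ))) ↔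
    ∃ (Q : Matrix (Fin p) (Fin p) ℝ) (c : ℝ), Qᵀ * Q = 1 ∧ 0 < c ∧
      B' = c • (Q * B) ∧ A₁' = c • (Q * A₁) := by
  have hBB : B * B⁻¹ = 1 := Matrix.mul_nonsing_inv B hB
  have hBB2 : B⁻¹ * B = 1 := Matrix.nonsing_inv_mul B hB
  have hB'B' : B' * B'⁻¹ = 1 := Matrix.mul_nonsing_inv B' hB'
  have hB'B'2 : B'⁻¹ * B' = 1 := Matrix.nonsing_inv_mul B' hB'
  constructor
  · rintro ⟨hΦ, a, ha, hSg⟩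
    set c : ℝ := σ' / (σ * Real.sqrt a) with hc_def
    have hsa : 0 < Real.sqrt a := Real.sqrt_pos.mpr ha
    have hc : 0 < c := div_pos hσ' (mul_pos hσ hsa)
    have hc2 : c ^ 2 = σ' ^ 2 / (σ ^ 2 * a) := by
      rw [hc_def, div_pow, mul_pow, Real.sq_sqrt ha.le]
    -- covariance relation solved for B⁻¹ * B⁻ᵀ
    have hcov : B⁻¹ * (B⁻¹)ᵀ = (σ' ^ 2 / (a * σ ^ 2)) • (B'⁻¹ * (B'⁻¹)ᵀ) := by
      have h1 : σ' ^ 2 • (B'⁻¹ * (B'⁻¹)ᵀ) = (a * σ ^ 2) • (B⁻¹ * (B⁻¹)ᵀ) := by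
        rw [hSg, smul_smul]
      have haσ : (a * σ ^ 2) ≠ 0 := (mul_pos ha (pow_pos hσ 2)).ne'
      have h2 := congrArg (fun M => ((a * σ ^ 2)⁻¹) • M) h1
      simp only [smul_smul] at h2
      rw [inv_mul_cancel₀ haσ, one_smul] at h2
      rw [div_eq_inv_mul]
      exact h2.symm
    refine ⟨c⁻¹ • (B' * B⁻¹), c, ?_, hc, ?_, ?_⟩
    · rw [mul_eq_one_comm]
      have : (c⁻¹ • (B' * B⁻¹)) * (c⁻¹ • (B' * B⁻¹))ᵀ
          = (c⁻¹ * c⁻¹) • (B' * (B⁻¹ * (B⁻¹)ᵀ) * B'ᵀ) := by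
        rw [Matrix.transpose_smul, Matrix.transpose_mul, Matrix.smul_mul,
          Matrix.mul_smul, smul_smul]
        ring_nf
        rw [Matrix.mul_assoc, Matrix.mul_assoc, Matrix.mul_assoc]
      rw [this, hcov]
      have h2 : B' * ((σ' ^ 2 / (a * σ ^ 2)) • (B'⁻¹ * (B'⁻¹)ᵀ)) * B'ᵀ
          = (σ' ^ 2 / (a * σ ^ 2)) • (1 : Matrix (Fin p) (Fin p) ℝ) := by
        rw [Matrix.mul_smul, Matrix.smul_mul]
        congr 1
        calc B' * (B'⁻¹ * (B'⁻¹)ᵀ) * B'ᵀ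
            = (B' * B'⁻¹) * ((B'⁻¹)ᵀ * B'ᵀ) := by
              rw [Matrix.mul_assoc, Matrix.mul_assoc, Matrix.mul_assoc]
          _ = 1 := by rw [hB'B', one_mul, ← Matrix.transpose_mul, hB'B', Matrix.transpose_one]
      rw [h2, smul_smul]
      have : c⁻¹ * c⁻¹ * (σ' ^ 2 / (a * σ ^ 2)) = 1 := by
        have : c⁻¹ * c⁻¹ = (c ^ 2)⁻¹ := by ring
        rw [this, hc2]
        field_simp
      rw [this, one_smul]
    · rw [Matrix.smul_mul, smul_smul, mul_inv_cancel₀ hc.ne', one_smul,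
        Matrix.mul_assoc, hBB2, Matrix.mul_one]
    · have : A₁' = B' * (B⁻¹ * A₁) := by
        rw [hΦ, ← Matrix.mul_assoc, hB'B', one_mul]
      rw [this, Matrix.smul_mul, smul_smul, mul_inv_cancel₀ hc.ne', one_smul,
        Matrix.mul_assoc]
  · rintro ⟨Q, c, hQ, hc, hB'eq, hA'eq⟩
    have hinv : B'⁻¹ = c⁻¹ • (B⁻¹ * Qᵀ) := by
      apply Matrix.inv_eq_left_inv
      rw [hB'eq, Matrix.smul_mul, Matrix.mul_smul, smul_smul, inv_mul_cancel₀ hc.ne',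
        one_smul, Matrix.mul_assoc, ← Matrix.mul_assoc Qᵀ Q B, hQ, one_mul, hBB2]
    constructor
    · rw [hinv, hA'eq, Matrix.smul_mul, Matrix.mul_smul, smul_smul,
        inv_mul_cancel₀ hc.ne', one_smul, Matrix.mul_assoc,
        ← Matrix.mul_assoc Qᵀ Q A₁, hQ, one_mul]
    · refine ⟨σ' ^ 2 / (c ^ 2 * σ ^ 2), by positivity, ?_⟩
      have hprod : B'⁻¹ * (B'⁻¹)ᵀ = (c⁻¹ * c⁻¹) • (B⁻¹ * (B⁻¹)ᵀ) := by
        rw [hinv, Matrix.transpose_smul, Matrix.transpose_mul, Matrix.smul_mul,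
          Matrix.mul_smul, smul_smul]
        congr 1
        rw [Matrix.mul_assoc, Matrix.transpose_transpose, ← Matrix.mul_assoc Qᵀ Q, hQ, one_mul]
      rw [hprod, smul_smul, smul_smul]
      congr 1
      field_simp
end

section
/- Let B, B' ∈ ℝ^{p×p} be invertible, A₁, A₁' ∈ ℝ^{p×p}, σ, σ' > 0, and η > 0. Let S = [B A₁] ∈ ℝ^{p×2p} and S' = [B' A₁'] ∈ ℝ^{p×2p}, and define α = sup over orthogonal Q ∈ ℝ^{p×p} of tr(Q · S · S'ᵀ). Then the infimum over orthogonal Q ∈ ℝ^{p×p} and scalars c > 0 of ‖S' − c·Q·S‖²_F + η·(σ' − c·σ)² equals ‖S'‖²_F + η·σ'² − (α + η·σ·σ')² / (‖S‖²_F + η·σ²). -/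
open Matrix

/-- Squared Frobenius norm of a real `p × 2p` matrix, `‖M‖²_F = tr (M Mᵀ)`. -/
noncomputable def frobSq {p : ℕ} (M : Matrix (Fin p) (Fin p ⊕ Fin p) ℝ) : ℝ :=
  Matrix.trace (M * Mᵀ)

/-- **Closed form for the observational alignment discrepancy** (Proposition 3.4).
With `S = [B A₁]`, `S' = [B' A₁']` and
`α = sup {tr (Q S S'ᵀ) : Q orthogonal}`, the infimum over orthogonal `Q` and `c > 0` of
`‖S' − cQS‖²_F + η (σ' − cσ)²` equals
`‖S'‖²_F + η σ'² − (α + η σ σ')² / (‖S‖²_F + η σ²)`. -/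
theorem obs_alignment_discrepancy_closed_form (p : ℕ)
    (B B' A₁ A₁' : Matrix (Fin p) (Fin p) ℝ)
    (hB : IsUnit B.det) (hB' : IsUnit B'.det)
    (σ σ' η : ℝ) (hσ : 0 < σ) (hσ' : 0 < σ') (hη : 0 < η)
    (S S' : Matrix (Fin p) (Fin p ⊕ Fin p) ℝ)
    (hS : S = Matrix.fromCols B A₁) (hS' : S' = Matrix.fromCols B' A₁')
    (α : ℝ)
    (hα : IsLUB {x : ℝ | ∃ Q : Matrix (Fin p) (Fin p) ℝ,
        Qᵀ * Q = 1 ∧ x = Matrix.trace (Q * (S * S'ᵀ))} α) :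
    sInf {x : ℝ | ∃ (Q : Matrix (Fin p) (Fin p) ℝ) (c : ℝ),
        Qᵀ * Q = 1 ∧ 0 < c ∧
        x = frobSq (S' - c • (Q * S)) + η * (σ' - c * σ) ^ 2} =
      frobSq S' + η * σ' ^ 2 -
        (α + η * σ * σ') ^ 2 / (frobSq S + η * σ ^ 2) := by
  classical
  have hfS : 0 ≤ frobSq S := by
    unfold frobSq
    rw [Matrix.trace]
    refine Finset.sum_nonneg fun i _ => ?_
    simp only [Matrix.diag_apply, Matrix.mul_apply, Matrix.transpose_apply]
    exact Finset.sum_nonneg fun j _ => mul_self_nonneg _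
  have ha : 0 < frobSq S + η * σ ^ 2 := by
    have : 0 < η * σ ^ 2 := by positivity
    linarith
  have hα0 : 0 ≤ α := by
    have h1 : Matrix.trace ((1 : Matrix (Fin p) (Fin p) ℝ) * (S * S'ᵀ)) ≤ α :=
      hα.1 ⟨1, by simp, rfl⟩
    have h2 : Matrix.trace ((-1 : Matrix (Fin p) (Fin p) ℝ) * (S * S'ᵀ)) ≤ α :=
      hα.1 ⟨-1, by simp, rfl⟩
    simp only [Matrix.one_mul, Matrix.neg_mul, Matrix.trace_neg] at h1 h2
    linarith
  have hβ : 0 < α + η * σ * σ' := by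
    have : 0 < η * σ * σ' := by positivity
    linarith
  -- key expansion
  have key : ∀ (Q : Matrix (Fin p) (Fin p) ℝ) (c : ℝ), Qᵀ * Q = 1 →
      frobSq (S' - c • (Q * S)) + η * (σ' - c * σ) ^ 2
        = (frobSq S' + η * σ' ^ 2) + c ^ 2 * (frobSq S + η * σ ^ 2)
          - 2 * c * (Matrix.trace (Q * (S * S'ᵀ)) + η * σ * σ') := by
    intro Q c hQ
    have h2 : Matrix.trace (Q * (S * (Sᵀ * Qᵀ))) = Matrix.trace (S * Sᵀ) := by
      calc Matrix.trace (Q * (S * (Sᵀ * Qᵀ)))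
          = Matrix.trace ((S * (Sᵀ * Qᵀ)) * Q) := Matrix.trace_mul_comm _ _
        _ = Matrix.trace (S * Sᵀ * (Qᵀ * Q)) := by simp only [Matrix.mul_assoc]
        _ = Matrix.trace (S * Sᵀ) := by rw [hQ, Matrix.mul_one]
    unfold frobSq
    simp only [Matrix.transpose_sub, Matrix.transpose_smul, Matrix.transpose_mul,
      Matrix.sub_mul, Matrix.mul_sub, Matrix.smul_mul, Matrix.mul_smul,
      Matrix.trace_sub, Matrix.trace_smul, smul_smul, smul_eq_mul, Matrix.mul_assoc]
    have h1 : Matrix.trace (S' * (Sᵀ * Qᵀ)) = Matrix.trace (Q * (S * S'ᵀ)) := by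
      rw [← Matrix.trace_transpose]
      simp [Matrix.transpose_mul, Matrix.mul_assoc]
    rw [h2, h1]
    ring
  have hne : Set.Nonempty {x : ℝ | ∃ (Q : Matrix (Fin p) (Fin p) ℝ) (c : ℝ),
      Qᵀ * Q = 1 ∧ 0 < c ∧
      x = frobSq (S' - c • (Q * S)) + η * (σ' - c * σ) ^ 2} :=
    ⟨_, 1, 1, by simp, one_pos, rfl⟩
  have hglb : IsGLB {x : ℝ | ∃ (Q : Matrix (Fin p) (Fin p) ℝ) (c : ℝ),
      Qᵀ * Q = 1 ∧ 0 < c ∧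
      x = frobSq (S' - c • (Q * S)) + η * (σ' - c * σ) ^ 2}
      (frobSq S' + η * σ' ^ 2 -
        (α + η * σ * σ') ^ 2 / (frobSq S + η * σ ^ 2)) := by
    constructor
    · rintro x ⟨Q, c, hQ, hc, rfl⟩
      rw [key Q c hQ]
      have htQ : Matrix.trace (Q * (S * S'ᵀ)) ≤ α := hα.1 ⟨Q, hQ, rfl⟩
      have hstep : 2 * c * (α + η * σ * σ') - c ^ 2 * (frobSq S + η * σ ^ 2)
          ≤ (α + η * σ * σ') ^ 2 / (frobSq S + η * σ ^ 2) := by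
        rw [le_div_iff₀ ha]
        nlinarith [sq_nonneg (c * (frobSq S + η * σ ^ 2) - (α + η * σ * σ'))]
      have hmono : c * (Matrix.trace (Q * (S * S'ᵀ)) + η * σ * σ')
          ≤ c * (α + η * σ * σ') :=
        mul_le_mul_of_nonneg_left (by linarith) hc.le
      linarith
    · intro w hw
      refine le_of_forall_pos_le_add fun ε hε => ?_
      set β : ℝ := α + η * σ * σ' with hβ_def
      set a : ℝ := frobSq S + η * σ ^ 2 with ha_def
      set δ : ℝ := min β (ε * a / (2 * β)) with hδ_def
      have hδ : 0 < δ := lt_min hβ (by positivity)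
      have hδβ : δ ≤ β := min_le_left _ _
      have hδε : δ * (2 * β) ≤ ε * a := by
        have h := min_le_right β (ε * a / (2 * β))
        calc δ * (2 * β) ≤ (ε * a / (2 * β)) * (2 * β) := by nlinarith
          _ = ε * a := div_mul_cancel₀ _ (by positivity)
      obtain ⟨x, hxS, hx1, hx2⟩ := hα.exists_between (show α - δ < α by linarith)
      obtain ⟨Q, hQ, rfl⟩ := hxS
      set b : ℝ := Matrix.trace (Q * (S * S'ᵀ)) + η * σ * σ' with hb_def
      have hbβ : b ≤ β := by rw [hb_def, hβ_def]; linarith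
      have hblow : β - δ < b := by rw [hb_def, hβ_def]; linarith
      have hb : 0 < b := by linarith
      have hc : 0 < b / a := div_pos hb ha
      have hw1 := hw ⟨Q, b / a, hQ, hc, rfl⟩
      rw [key Q (b / a) hQ] at hw1
      have hval : (frobSq S' + η * σ' ^ 2) + (b / a) ^ 2 * a - 2 * (b / a) * b
          = frobSq S' + η * σ' ^ 2 - b ^ 2 / a := by
        field_simp
        ring
      rw [hval] at hw1
      have hdiff : (β ^ 2 - b ^ 2) / a ≤ ε := by
        rw [div_le_iff₀ ha]
        nlinarith
      have heq : frobSq S' + η * σ' ^ 2 - b ^ 2 / a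
          = (frobSq S' + η * σ' ^ 2 - β ^ 2 / a) + (β ^ 2 - b ^ 2) / a := by ring
      rw [heq] at hw1
      linarith
  exact hglb.csInf_eq hne
end

section
/- Let B, B' ∈ ℝ^{p×p} be invertible, A₁, A₁' ∈ ℝ^{p×p}, σ, σ' > 0, and η > 0. Let S = [B A₁], S' = [B' A₁'] ∈ ℝ^{p×2p}, and suppose S · S'ᵀ = U · D · Vᵀ where U, V ∈ ℝ^{p×p} are orthogonal and D is a diagonal matrix with nonnegative diagonal entries. Set Q* = V·Uᵀ and c* = (tr(D) + η·σ·σ') / (‖S‖²_F + η·σ²). Then c* > 0, Q* is orthogonal, and for every orthogonal Q ∈ ℝ^{p×p} and every c > 0, ‖S' − c*·Q*·S‖²_F + η·(σ' − c*·σ)² ≤ ‖S' − c·Q·S‖²_F + η·(σ' − c·σ)², and the attained value equals ‖S'‖²_F + η·σ'² − (tr(D) + η·σ·σ')² / (‖S‖²_F + η·σ²). -/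
open Matrix

private lemma frobSq_nonneg {p : ℕ} (M : Matrix (Fin p) (Fin p ⊕ Fin p) ℝ) :
    0 ≤ frobSq M := by
  unfold frobSq
  rw [Matrix.trace]
  refine Finset.sum_nonneg fun i _ => ?_
  simp only [Matrix.diag_apply, Matrix.mul_apply, Matrix.transpose_apply]
  exact Finset.sum_nonneg fun j _ => mul_self_nonneg _

private lemma diag_le_one' {p : ℕ} (W : Matrix (Fin p) (Fin p) ℝ)
    (hW : Wᵀ * W = 1) (i : Fin p) : W i i ≤ 1 := by
  have h : ∑ k, W k i * W k i = 1 := by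
    have := congrFun (congrFun hW i) i
    simpa [Matrix.mul_apply, Matrix.one_apply] using this
  have h2 : W i i * W i i ≤ 1 := by
    rw [← h]
    exact Finset.single_le_sum (fun k _ => mul_self_nonneg (W k i)) (Finset.mem_univ i)
  nlinarith

private lemma trace_mul_diag_le {p : ℕ} (W : Matrix (Fin p) (Fin p) ℝ)
    (hW : Wᵀ * W = 1) (d : Fin p → ℝ) (hd : ∀ i, 0 ≤ d i) :
    Matrix.trace (W * Matrix.diagonal d) ≤ Matrix.trace (Matrix.diagonal d) := by
  rw [Matrix.trace, Matrix.trace]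
  simp only [Matrix.diag_apply, Matrix.mul_diagonal, Matrix.diagonal_apply_eq]
  refine Finset.sum_le_sum fun i _ => ?_
  calc W i i * d i ≤ 1 * d i := mul_le_mul_of_nonneg_right (diag_le_one' W hW i) (hd i)
    _ = d i := one_mul _

/-- **Optimizers of the observational alignment discrepancy** (Proposition 3.4).
Given a singular value decomposition `S S'ᵀ = U D Vᵀ`, the pair `Q* = V Uᵀ`,
`c* = (tr D + η σ σ') / (‖S‖²_F + η σ²)` minimizes the alignment objective over
orthogonal `Q` and `c > 0`, and the attained value is
`‖S'‖²_F + η σ'² − (tr D + η σ σ')² / (‖S‖²_F + η σ²)`. -/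
theorem obs_alignment_discrepancy_optimizer (p : ℕ)
    (B B' A₁ A₁' : Matrix (Fin p) (Fin p) ℝ)
    (hB : IsUnit B.det) (hB' : IsUnit B'.det)
    (σ σ' η : ℝ) (hσ : 0 < σ) (hσ' : 0 < σ') (hη : 0 < η)
    (S S' : Matrix (Fin p) (Fin p ⊕ Fin p) ℝ)
    (hS : S = Matrix.fromCols B A₁) (hS' : S' = Matrix.fromCols B' A₁')
    (U V : Matrix (Fin p) (Fin p) ℝ) (hU : Uᵀ * U = 1) (hV : Vᵀ * V = 1)
    (d : Fin p → ℝ) (hd : ∀ i, 0 ≤ d i)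
    (hSVD : S * S'ᵀ = U * Matrix.diagonal d * Vᵀ)
    (Qstar : Matrix (Fin p) (Fin p) ℝ) (hQstar : Qstar = V * Uᵀ)
    (cstar : ℝ)
    (hcstar : cstar = (Matrix.trace (Matrix.diagonal d) + η * σ * σ') /
        (frobSq S + η * σ ^ 2)) :
    0 < cstar ∧ Qstarᵀ * Qstar = 1 ∧
    (∀ (Q : Matrix (Fin p) (Fin p) ℝ) (c : ℝ), Qᵀ * Q = 1 → 0 < c →
      frobSq (S' - cstar • (Qstar * S)) + η * (σ' - cstar * σ) ^ 2 ≤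
        frobSq (S' - c • (Q * S)) + η * (σ' - c * σ) ^ 2) ∧
    frobSq (S' - cstar • (Qstar * S)) + η * (σ' - cstar * σ) ^ 2 =
      frobSq S' + η * σ' ^ 2 -
        (Matrix.trace (Matrix.diagonal d) + η * σ * σ') ^ 2 /
          (frobSq S + η * σ ^ 2) := by
  have hUU : U * Uᵀ = 1 := mul_eq_one_comm.mp hU
  have hVV : V * Vᵀ = 1 := mul_eq_one_comm.mp hV
  set T : ℝ := Matrix.trace (Matrix.diagonal d) + η * σ * σ' with hT
  set N : ℝ := frobSq S + η * σ ^ 2 with hNdef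
  have htrD : 0 ≤ Matrix.trace (Matrix.diagonal d) := by
    rw [Matrix.trace]
    exact Finset.sum_nonneg fun i _ => by simpa using hd i
  have hTpos : 0 < T := by rw [hT]; positivity
  have hNpos : 0 < N := by
    have h0 := frobSq_nonneg S
    rw [hNdef]; positivity
  have hcpos : 0 < cstar := by rw [hcstar]; exact div_pos hTpos hNpos
  -- orthogonality of Qstar
  have hQstarOrth : Qstarᵀ * Qstar = 1 := by
    rw [hQstar, Matrix.transpose_mul, Matrix.transpose_transpose]
    calc U * Vᵀ * (V * Uᵀ) = U * (Vᵀ * V) * Uᵀ := by noncomm_ring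
      _ = 1 := by rw [hV, Matrix.mul_one, hUU]
  -- expansion of the objective
  have expand : ∀ (Q : Matrix (Fin p) (Fin p) ℝ) (c : ℝ), Qᵀ * Q = 1 →
      frobSq (S' - c • (Q * S)) + η * (σ' - c * σ) ^ 2 =
        (frobSq S' + η * σ' ^ 2)
          - 2 * c * (Matrix.trace (Q * (S * S'ᵀ)) + η * σ * σ') + c ^ 2 * N := by
    intro Q c hQ
    have hcross : Matrix.trace (S' * (Q * S)ᵀ) = Matrix.trace (Q * (S * S'ᵀ)) := by
      have heq : S' * (Q * S)ᵀ = (Q * (S * S'ᵀ))ᵀ := by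
        rw [Matrix.transpose_mul, Matrix.transpose_mul, Matrix.transpose_mul,
          Matrix.transpose_transpose, Matrix.mul_assoc]
      rw [heq, Matrix.trace_transpose]
    have hcross2 : Matrix.trace ((Q * S) * S'ᵀ) = Matrix.trace (Q * (S * S'ᵀ)) := by
      rw [Matrix.mul_assoc]
    have hQS : Matrix.trace ((Q * S) * (Q * S)ᵀ) = frobSq S := by
      rw [Matrix.trace_mul_comm, frobSq, Matrix.trace_mul_comm S Sᵀ]
      congr 1
      rw [Matrix.transpose_mul, Matrix.mul_assoc Sᵀ Qᵀ, ← Matrix.mul_assoc Qᵀ Q S,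
        hQ, Matrix.one_mul]
    have hexp : frobSq (S' - c • (Q * S)) =
        frobSq S' - 2 * c * Matrix.trace (Q * (S * S'ᵀ)) + c ^ 2 * frobSq S := by
      rw [frobSq, Matrix.transpose_sub, Matrix.transpose_smul, Matrix.sub_mul,
        Matrix.mul_sub, Matrix.mul_sub, Matrix.smul_mul, Matrix.mul_smul,
        Matrix.smul_mul]
      simp only [Matrix.mul_smul, Matrix.trace_sub, Matrix.trace_smul, smul_smul, smul_eq_mul]
      rw [hcross, hcross2, hQS]
      simp only [frobSq]
      ring
    rw [hexp, hNdef]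
    ring
  -- trace with Qstar equals trace D
  have htrQstar : Matrix.trace (Qstar * (S * S'ᵀ)) = Matrix.trace (Matrix.diagonal d) := by
    rw [hSVD, hQstar]
    have heq : V * Uᵀ * (U * Matrix.diagonal d * Vᵀ) = V * Matrix.diagonal d * Vᵀ := by
      calc V * Uᵀ * (U * Matrix.diagonal d * Vᵀ)
          = V * (Uᵀ * U) * (Matrix.diagonal d * Vᵀ) := by noncomm_ring
        _ = V * Matrix.diagonal d * Vᵀ := by
            rw [hU, Matrix.mul_one, Matrix.mul_assoc]
    rw [heq, Matrix.trace_mul_comm, ← Matrix.mul_assoc, hV, Matrix.one_mul]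
  -- trace bound for general orthogonal Q
  have htrace_le : ∀ (Q : Matrix (Fin p) (Fin p) ℝ), Qᵀ * Q = 1 →
      Matrix.trace (Q * (S * S'ᵀ)) ≤ Matrix.trace (Matrix.diagonal d) := by
    intro Q hQ
    rw [hSVD]
    have h1 : Q * (U * Matrix.diagonal d * Vᵀ) = (Q * U * Matrix.diagonal d) * Vᵀ := by
      noncomm_ring
    have h2 : Vᵀ * (Q * U * Matrix.diagonal d) = (Vᵀ * Q * U) * Matrix.diagonal d := by
      noncomm_ring
    rw [h1, Matrix.trace_mul_comm, h2]
    have hW : (Vᵀ * Q * U)ᵀ * (Vᵀ * Q * U) = 1 := by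
      calc (Vᵀ * Q * U)ᵀ * (Vᵀ * Q * U)
          = Uᵀ * Qᵀ * (V * Vᵀ) * Q * U := by
            simp only [Matrix.transpose_mul, Matrix.transpose_transpose]; noncomm_ring
        _ = Uᵀ * (Qᵀ * Q) * U := by rw [hVV, Matrix.mul_one]; noncomm_ring
        _ = 1 := by rw [hQ, Matrix.mul_one, hU]
    exact trace_mul_diag_le _ hW d hd
  -- value at the optimum
  have hvalstar : frobSq (S' - cstar • (Qstar * S)) + η * (σ' - cstar * σ) ^ 2 =
      (frobSq S' + η * σ' ^ 2) - T ^ 2 / N := by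
    rw [expand Qstar cstar hQstarOrth, htrQstar, ← hT, hcstar]
    have hN0 : N ≠ 0 := ne_of_gt hNpos
    field_simp
    ring
  refine ⟨hcpos, hQstarOrth, ?_, ?_⟩
  · intro Q c hQ hc
    rw [hvalstar, expand Q c hQ]
    have hg := htrace_le Q hQ
    set g : ℝ := Matrix.trace (Q * (S * S'ᵀ))
    have hgT : g + η * σ * σ' ≤ T := by rw [hT]; linarith
    have main : (frobSq S' + η * σ' ^ 2) - T ^ 2 / N ≤
        (frobSq S' + η * σ' ^ 2) - 2 * c * (g + η * σ * σ') + c ^ 2 * N := by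
      have h1 : 2 * c * (g + η * σ * σ') - c ^ 2 * N ≤ T ^ 2 / N := by
        rw [div_eq_mul_inv, ← sub_nonneg]
        have hNinv : 0 < N⁻¹ := inv_pos.mpr hNpos
        have expand2 : T ^ 2 * N⁻¹ - (2 * c * (g + η * σ * σ') - c ^ 2 * N) =
            ((T - c * N) ^ 2) * N⁻¹ + 2 * c * (T - (g + η * σ * σ')) := by
          field_simp
          ring
        rw [expand2]
        have := mul_nonneg (mul_nonneg (by norm_num : (0:ℝ) ≤ 2) hc.le)
          (sub_nonneg.mpr hgT)
        positivity
      linarith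
    exact main
  · rw [hvalstar]
end

section
/- Let Σᵤ ∈ ℝ^{p×p} be positive definite, Φ ∈ ℝ^{p×p}, and let B_can ∈ ℝ^{p×p} satisfy B_canᵀ · B_can = Σᵤ⁻¹ with Γ_can = B_can · Φ. Let B̃ ∈ ℝ^{p×p} be invertible, Ã₁ ∈ ℝ^{p×p}, and σ̃ > 0. Then B̃⁻¹ · Ã₁ = Φ and σ̃² · B̃⁻¹ · B̃⁻ᵀ = Σᵤ hold if and only if there exist an orthogonal matrix Q ∈ ℝ^{p×p} and a scalar c > 0 such that B̃ = c·Q·B_can, Ã₁ = c·Q·Γ_can, and σ̃ = c. -/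
open Matrix

/-- **Characterization of the empirical equivalence class via the canonical representative**
(Proposition 4.1, part 2).  A structural representation `(B̃, Ã₁, σ̃)` induces the
reduced-form parameters `(Φ, Σᵤ)` if and only if `B̃ = c Q B_can`, `Ã₁ = c Q Γ_can`, and
`σ̃ = c` for some orthogonal `Q` and some `c > 0`. -/
theorem canonical_representative_orbit (p : ℕ)
    (Sigma_u Phi Bcan Gcan : Matrix (Fin p) (Fin p) ℝ)
    (hSigma : Sigma_u.PosDef)
    (hBcan : Bcanᵀ * Bcan = Sigma_u⁻¹)
    (hGcan : Gcan = Bcan * Phi)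
    (Btil A₁til : Matrix (Fin p) (Fin p) ℝ) (hBtil : IsUnit Btil.det)
    (σtil : ℝ) (hσtil : 0 < σtil) :
    (Btil⁻¹ * A₁til = Phi ∧
      σtil ^ 2 • (Btil⁻¹ * (Btil⁻¹)ᵀ) = Sigma_u) ↔
    ∃ (Q : Matrix (Fin p) (Fin p) ℝ) (c : ℝ), Qᵀ * Q = 1 ∧ 0 < c ∧
      Btil = c • (Q * Bcan) ∧ A₁til = c • (Q * Gcan) ∧ σtil = c := by
  have hSU : IsUnit Sigma_u.det := (ne_of_gt hSigma.det_pos).isUnit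
  have hSUinv : IsUnit (Sigma_u⁻¹).det := Sigma_u.isUnit_nonsing_inv_det hSU
  have hBc : IsUnit Bcan.det := by
    have := hSUinv
    rw [← hBcan, Matrix.det_mul, Matrix.det_transpose] at this
    exact isUnit_of_mul_isUnit_left this
  have hBcBc : Bcan⁻¹ * Bcan = 1 := Matrix.nonsing_inv_mul Bcan hBc
  have hBcBc' : Bcan * Bcan⁻¹ = 1 := Matrix.mul_nonsing_inv Bcan hBc
  have hσne : (σtil : ℝ) ≠ 0 := ne_of_gt hσtil
  constructor
  · rintro ⟨h1, h2⟩
    refine ⟨σtil⁻¹ • (Btil * Bcan⁻¹), σtil, ?_, hσtil, ?_, ?_, rfl⟩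
    · -- orthogonality
      have hBB : Btil⁻¹ * Btil = 1 := Matrix.nonsing_inv_mul Btil hBtil
      have hBB' : Btil * Btil⁻¹ = 1 := Matrix.mul_nonsing_inv Btil hBtil
      -- Sigma_u⁻¹ = σ⁻² • (Btilᵀ * Btil)
      have hinv : Sigma_u⁻¹ = (σtil ^ 2)⁻¹ • (Btilᵀ * Btil) := by
        apply Matrix.inv_eq_right_inv
        rw [← h2]
        rw [Matrix.smul_mul, Matrix.mul_smul, smul_smul,
          mul_inv_cancel₀ (by positivity : (σtil:ℝ)^2 ≠ 0), one_smul]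
        calc Btil⁻¹ * (Btil⁻¹)ᵀ * (Btilᵀ * Btil)
            = Btil⁻¹ * ((Btil * Btil⁻¹)ᵀ * Btil) := by
              rw [Matrix.transpose_mul]; noncomm_ring
          _ = 1 := by rw [hBB', Matrix.transpose_one, Matrix.one_mul, hBB]
      have key : Btilᵀ * Btil = (σtil ^ 2) • (Bcanᵀ * Bcan) := by
        rw [hBcan, hinv, smul_smul,
          mul_inv_cancel₀ (by positivity : (σtil:ℝ)^2 ≠ 0), one_smul]
      rw [Matrix.transpose_smul, Matrix.smul_mul, Matrix.mul_smul, smul_smul,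
        Matrix.transpose_mul, Matrix.transpose_nonsing_inv]
      have : (Bcanᵀ)⁻¹ * Btilᵀ * (Btil * Bcan⁻¹)
          = (Bcanᵀ)⁻¹ * (Btilᵀ * Btil) * Bcan⁻¹ := by noncomm_ring
      rw [this, key, Matrix.mul_smul, Matrix.smul_mul, smul_smul]
      have hc : σtil⁻¹ * σtil⁻¹ * σtil ^ 2 = 1 := by field_simp
      rw [hc, one_smul]
      calc (Bcanᵀ)⁻¹ * (Bcanᵀ * Bcan) * Bcan⁻¹
          = (Bcanᵀ)⁻¹ * Bcanᵀ * (Bcan * Bcan⁻¹) := by noncomm_ring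
        _ = 1 := by
            rw [Matrix.nonsing_inv_mul _ (by rwa [Matrix.det_transpose]),
              hBcBc', Matrix.mul_one]
    · rw [Matrix.smul_mul, smul_smul, mul_inv_cancel₀ hσne, one_smul,
        Matrix.mul_assoc, hBcBc, Matrix.mul_one]
    · have hA : A₁til = Btil * Phi := by
        rw [← h1, ← Matrix.mul_assoc, Matrix.mul_nonsing_inv Btil hBtil,
          Matrix.one_mul]
      rw [hA, hGcan, Matrix.smul_mul, smul_smul, mul_inv_cancel₀ hσne, one_smul]
      symm
      calc Btil * Bcan⁻¹ * (Bcan * Phi) = Btil * (Bcan⁻¹ * Bcan) * Phi := by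
            noncomm_ring
        _ = Btil * Phi := by rw [hBcBc, Matrix.mul_one]
  · rintro ⟨Q, c, hQ, hc, hB, hA, hσ⟩
    have hcne : (c : ℝ) ≠ 0 := ne_of_gt hc
    have hQQ : Q * Qᵀ = 1 := mul_eq_one_comm.mp hQ
    have hBinv : Btil⁻¹ = c⁻¹ • (Bcan⁻¹ * Qᵀ) := by
      apply Matrix.inv_eq_left_inv
      rw [hB, Matrix.smul_mul, Matrix.mul_smul, smul_smul,
        inv_mul_cancel₀ hcne, one_smul]
      calc Bcan⁻¹ * Qᵀ * (Q * Bcan) = Bcan⁻¹ * (Qᵀ * Q) * Bcan := by noncomm_ring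
        _ = 1 := by rw [hQ, Matrix.mul_one, hBcBc]
    constructor
    · rw [hBinv, hA, hGcan, Matrix.smul_mul, Matrix.mul_smul, smul_smul,
        inv_mul_cancel₀ hcne, one_smul]
      calc Bcan⁻¹ * Qᵀ * (Q * (Bcan * Phi))
          = Bcan⁻¹ * (Qᵀ * Q) * (Bcan * Phi) := by noncomm_ring
        _ = Phi := by
            rw [hQ, Matrix.mul_one, ← Matrix.mul_assoc, hBcBc, Matrix.one_mul]
    · rw [hBinv, hσ, Matrix.transpose_smul, Matrix.transpose_mul,
        Matrix.transpose_transpose, Matrix.smul_mul, Matrix.mul_smul,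
        smul_smul, smul_smul]
      have hcc : c ^ 2 * c⁻¹ * c⁻¹ = 1 := by field_simp
      rw [hcc, one_smul]
      have hSinv : Sigma_u = Bcan⁻¹ * (Bcan⁻¹)ᵀ := by
        rw [Matrix.transpose_nonsing_inv, ← Matrix.mul_inv_rev, hBcan,
          Matrix.nonsing_inv_nonsing_inv _ hSU]
      calc Bcan⁻¹ * Qᵀ * (Q * (Bcan⁻¹)ᵀ)
          = Bcan⁻¹ * (Qᵀ * Q) * (Bcan⁻¹)ᵀ := by noncomm_ring
        _ = Sigma_u := by rw [hQ, Matrix.mul_one, hSinv]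
end

section
/- Let Φ ∈ ℝ^{p×p} have spectral radius strictly less than 1 (i.e., every complex eigenvalue of Φ has modulus < 1), and let Σᵤ ∈ ℝ^{p×p}. Then there exists a unique matrix Σ ∈ ℝ^{p×p} satisfying the Lyapunov equation Σ = Φ·Σ·Φᵀ + Σᵤ. -/
open Matrix
open scoped ENNReal NNReal

section Aux

attribute [local instance] Matrix.linftyOpNormedRing Matrix.linftyOpNormedAlgebra

variable {p : ℕ}

/-- spectral radius bound from eigenvalue bound -/
lemma aux_specrad (A : Matrix (Fin p) (Fin p) ℂ)
    (h : ∀ μ ∈ spectrum ℂ A, ‖μ‖ < 1) :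
    spectralRadius ℂ A < 1 := by
  have hfin : (spectrum ℂ A).Finite := A.finite_spectrum
  set F := hfin.toFinset with hF
  have hsup : spectralRadius ℂ A ≤ F.sup (fun μ => (‖μ‖₊ : ℝ≥0∞)) := by
    refine iSup₂_le fun μ hμ => Finset.le_sup (f := fun μ => (‖μ‖₊ : ℝ≥0∞)) ?_
    simpa [hF] using hμ
  refine hsup.trans_lt ?_
  rw [Finset.sup_lt_iff (by simp : (⊥ : ℝ≥0∞) < 1)]
  intro μ hμ
  have hμ' : ‖μ‖ < 1 := h μ (by simpa [hF] using hμ)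
  have : ‖μ‖ < 1 := by simpa using hμ'
  exact_mod_cast (by exact_mod_cast this : ‖μ‖₊ < (1 : NNReal))

/-- some power has norm < 1 -/
lemma aux_pow_norm_lt (A : Matrix (Fin p) (Fin p) ℂ)
    (h : ∀ μ ∈ spectrum ℂ A, ‖μ‖ < 1) :
    ∃ n : ℕ, 1 ≤ n ∧ ‖A ^ n‖ < 1 := by
  have hρ := aux_specrad A h
  have hg := spectrum.pow_nnnorm_pow_one_div_tendsto_nhds_spectralRadius A
  have hev : ∀ᶠ n : ℕ in Filter.atTop,
      ((‖A ^ n‖₊ : ℝ≥0∞) ^ (1 / (n : ℝ))) < 1 := hg.eventually_lt_const hρ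
  obtain ⟨n, hn, hn1⟩ := (hev.and (Filter.eventually_ge_atTop 1)).exists
  refine ⟨n, hn1, ?_⟩
  by_contra hcon
  push_neg at hcon
  have h1 : (1 : ℝ≥0∞) ≤ (‖A ^ n‖₊ : ℝ≥0∞) := by
    exact_mod_cast (by exact_mod_cast hcon : (1 : NNReal) ≤ ‖A ^ n‖₊)
  have : (1 : ℝ≥0∞) ≤ (‖A ^ n‖₊ : ℝ≥0∞) ^ (1 / (n : ℝ)) := by
    calc (1 : ℝ≥0∞) = 1 ^ (1 / (n : ℝ)) := (ENNReal.one_rpow _).symm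
    _ ≤ (‖A ^ n‖₊ : ℝ≥0∞) ^ (1 / (n : ℝ)) :=
      ENNReal.rpow_le_rpow h1 (by positivity)
  exact absurd hn (not_lt.mpr this)

lemma aux_spectrum_transpose (A : Matrix (Fin p) (Fin p) ℂ) :
    spectrum ℂ Aᵀ = spectrum ℂ A := by
  ext μ
  simp only [spectrum.mem_iff, not_iff_not]
  have key : algebraMap ℂ (Matrix (Fin p) (Fin p) ℂ) μ - Aᵀ =
      (algebraMap ℂ (Matrix (Fin p) (Fin p) ℂ) μ - A)ᵀ := by
    rw [transpose_sub]
    congr 1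
    ext i j
    simp [Matrix.algebraMap_matrix_apply, Matrix.transpose_apply, eq_comm]
  rw [key, Matrix.isUnit_iff_isUnit_det, Matrix.det_transpose,
    ← Matrix.isUnit_iff_isUnit_det]

/-- key uniqueness: only 0 solves the homogeneous equation -/
lemma aux_homog (Phi : Matrix (Fin p) (Fin p) ℝ)
    (hPhi : ∀ μ ∈ spectrum ℂ (Phi.map (Complex.ofReal)), ‖μ‖ < 1)
    (S : Matrix (Fin p) (Fin p) ℝ) (hS : S = Phi * S * Phiᵀ) : S = 0 := by
  set A : Matrix (Fin p) (Fin p) ℂ := Phi.map Complex.ofReal with hA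
  set T : Matrix (Fin p) (Fin p) ℂ := S.map Complex.ofReal with hT
  have hTeq : T = A * T * Aᵀ := by
    rw [hT, hA]
    conv_lhs => rw [hS]
    have h1 : ∀ M N : Matrix (Fin p) (Fin p) ℝ,
        (M * N).map (Complex.ofReal) = M.map Complex.ofReal * N.map Complex.ofReal := by
      intro M N
      exact Matrix.map_mul (f := Complex.ofRealHom)
    rw [h1, h1, Matrix.transpose_map]
  -- iterate
  have hiter : ∀ m : ℕ, T = A ^ m * T * Aᵀ ^ m := by
    intro m
    induction m with
    | zero => simp
    | succ k ih =>
      rw [pow_succ' A, pow_succ Aᵀ]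
      calc T = A * T * Aᵀ := hTeq
      _ = A * (A ^ k * T * Aᵀ ^ k) * Aᵀ := by rw [← ih]
      _ = A * A ^ k * T * (Aᵀ ^ k * Aᵀ) := by noncomm_ring
  obtain ⟨n, hn1, hnlt⟩ := aux_pow_norm_lt A hPhi
  obtain ⟨m, hm1, hmlt⟩ := aux_pow_norm_lt Aᵀ
    (by rw [aux_spectrum_transpose]; exact hPhi)
  set N := n * m with hN
  have hAN : ‖A ^ N‖ < 1 := by
    have : A ^ N = (A ^ n) ^ m := by rw [hN, pow_mul]
    rw [this]
    calc ‖(A ^ n) ^ m‖ ≤ ‖A ^ n‖ ^ m := norm_pow_le' _ (by omega)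
    _ < 1 := pow_lt_one₀ (norm_nonneg _) hnlt (by omega)
  have hATN : ‖Aᵀ ^ N‖ < 1 := by
    have : Aᵀ ^ N = (Aᵀ ^ m) ^ n := by rw [hN, mul_comm, pow_mul]
    rw [this]
    calc ‖(Aᵀ ^ m) ^ n‖ ≤ ‖Aᵀ ^ m‖ ^ n := norm_pow_le' _ (by omega)
    _ < 1 := pow_lt_one₀ (norm_nonneg _) hmlt (by omega)
  have hbound : ‖T‖ ≤ ‖A ^ N‖ * ‖T‖ * ‖Aᵀ ^ N‖ := by
    calc ‖T‖ = ‖A ^ N * T * Aᵀ ^ N‖ := by rw [← hiter N]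
    _ ≤ ‖A ^ N * T‖ * ‖Aᵀ ^ N‖ := norm_mul_le _ _
    _ ≤ ‖A ^ N‖ * ‖T‖ * ‖Aᵀ ^ N‖ :=
      mul_le_mul_of_nonneg_right (norm_mul_le _ _) (norm_nonneg _)
  have hT0 : ‖T‖ = 0 := by
    nlinarith [norm_nonneg T, norm_nonneg (A ^ N), norm_nonneg (Aᵀ ^ N),
      mul_nonneg (norm_nonneg (A ^ N)) (norm_nonneg T)]
  have : T = 0 := norm_eq_zero.mp hT0
  ext i j
  have h2 : ((S i j : ℂ)) = 0 := by
    have h3 := congrFun (congrFun this i) j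
    simpa [hT, Matrix.map_apply] using h3
  simpa using Complex.ofReal_eq_zero.mp h2

end Aux

/-- **Existence and uniqueness for the discrete Lyapunov equation.**
If every complex eigenvalue of `Φ` has modulus `< 1` (spectral radius `< 1`), then for any
`Σᵤ` there is a unique real matrix `Σ` with `Σ = Φ Σ Φᵀ + Σᵤ`. -/
theorem lyapunov_unique_solution (p : ℕ)
    (Phi Sigma_u : Matrix (Fin p) (Fin p) ℝ)
    (hPhi : ∀ μ ∈ spectrum ℂ (Phi.map (Complex.ofReal)), ‖μ‖ < 1) :
    ∃! Sigma : Matrix (Fin p) (Fin p) ℝ,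
      Sigma = Phi * Sigma * Phiᵀ + Sigma_u := by
  set T : Matrix (Fin p) (Fin p) ℝ →ₗ[ℝ] Matrix (Fin p) (Fin p) ℝ :=
    { toFun := fun S => S - Phi * S * Phiᵀ
      map_add' := by
        intro x y
        simp only [Matrix.mul_add, Matrix.add_mul]
        abel
      map_smul' := by
        intro c x
        simp only [Matrix.mul_smul, Matrix.smul_mul, RingHom.id_apply, smul_sub] } with hTdef
  have hinj : Function.Injective T := by
    rw [injective_iff_map_eq_zero]
    intro x hx
    have hx' : x - Phi * x * Phiᵀ = 0 := hx
    have : x = Phi * x * Phiᵀ := by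
      rw [sub_eq_zero] at hx'; exact hx'
    exact aux_homog Phi hPhi x this
  have hsurj : Function.Surjective T :=
    LinearMap.surjective_of_injective hinj
  obtain ⟨S, hSeq⟩ := hsurj Sigma_u
  have hSeq' : S - Phi * S * Phiᵀ = Sigma_u := hSeq
  refine ⟨S, ?_, ?_⟩
  · rw [← hSeq']; abel
  · intro y hy
    apply hinj
    have h1 : T y = Sigma_u := by
      show y - Phi * y * Phiᵀ = Sigma_u
      nth_rewrite 1 [hy]
      abel
    rw [h1, hSeq]
end
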